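/- No finite group of order 6 admits a (0; 3, 3, 3, 3)-generating vector; consequently (0; 3, 3, 3, 3) is not an actual signature for genus 3. -/

import Mathlib

/-- The Riemann–Hurwitz formula `σ - 1 = N (h - 1 + (1/2) Σ (1 - 1/mᵢ))`
as an equality of rational numbers. -/
def RHFormula (σ N h : ℕ) (m : List ℕ) : Prop :=
  (σ : ℚ) - 1 = (N : ℚ) * ((h : ℚ) - 1 + (1 / 2) * (m.map (fun x => 1 - 1 / (x : ℚ))).sum)

/-- `(h; m₁, …, m_r)` is a potential signature for genus `σ`: each `mᵢ ≥ 2` and there is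
a positive integer `N` with `mᵢ ∣ N` for all `i` satisfying the Riemann–Hurwitz formula. -/
def IsPotentialSignature (σ h : ℕ) (m : List ℕ) : Prop :=
  (∀ x ∈ m, 2 ≤ x) ∧ ∃ N : ℕ, 0 < N ∧ (∀ x ∈ m, x ∣ N) ∧ RHFormula σ N h m

/-- The set `P_σ` of potential signatures for genus `σ`, as a set of pairs `(h, [m₁, …, m_r])`. -/
def PotSig (σ : ℕ) : Set (ℕ × List ℕ) := {p | IsPotentialSignature σ p.1 p.2}
open scoped commutatorElement
/-- `(a, b, c)` is an `(h; m₁, …, m_r)`-generating vector for the group `G`: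
the elements generate `G`, the order of `cᵢ` is `mᵢ`, and
`∏ ⁅aᵢ, bᵢ⁆ · ∏ cⱼ = 1`. -/
def IsGenVector (G : Type*) [Group G] (h : ℕ) (m : List ℕ)
    (a b : Fin h → G) (c : Fin m.length → G) : Prop :=
  Subgroup.closure (Set.range a ∪ Set.range b ∪ Set.range c) = ⊤ ∧
  (∀ i : Fin m.length, orderOf (c i) = m.get i) ∧
  (List.ofFn fun i => ⁅a i, b i⁆).prod * (List.ofFn c).prod = 1

/-- `G` admits an `(h; m₁, …, m_r)`-generating vector. -/
def HasGenVector (G : Type*) [Group G] (h : ℕ) (m : List ℕ) : Prop :=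
  ∃ (a b : Fin h → G) (c : Fin m.length → G), IsGenVector G h m a b c

/-- `(h; m₁, …, m_r)` (with all `mᵢ ≥ 2`) is an actual signature for genus `σ`: some finite
group `G` admits an `(h; m₁, …, m_r)`-generating vector and `N = |G|` satisfies the
Riemann–Hurwitz formula for genus `σ`. -/
def IsActualSignature (σ h : ℕ) (m : List ℕ) : Prop :=
  (∀ x ∈ m, 2 ≤ x) ∧
  ∃ (G : Type) (_ : Group G) (_ : Fintype G),
    HasGenVector G h m ∧ RHFormula σ (Fintype.card G) h m

/-- No finite group of order 6 admits a `(0; 3, 3, 3, 3)`-generating vector;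
consequently `(0; 3, 3, 3, 3)` is not an actual signature for genus 3. -/
theorem no_three_three_three_three_genus_three :
    (∀ (G : Type) [Group G] [Fintype G], Fintype.card G = 6 →
      ¬ HasGenVector G 0 [3, 3, 3, 3]) ∧
    ¬ IsActualSignature 3 0 [3, 3, 3, 3] := by
  have key : ∀ (G : Type) [Group G] [Fintype G], Fintype.card G = 6 →
      ¬ HasGenVector G 0 [3, 3, 3, 3] := by
    intro G _ _ hcard ⟨a, b, c, hclos, horder, _⟩
    haveI : Fact (Nat.Prime 3) := ⟨by norm_num⟩
    have hNcard : Nat.card G = 6 := by rw [Nat.card_eq_fintype_card, hcard]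
    obtain ⟨P⟩ : Nonempty (Sylow 3 G) := Sylow.nonempty
    have hPcard : Nat.card (P : Subgroup G) = 3 := by
      rw [P.card_eq_multiplicity, hNcard,
        show (6:ℕ) = 3 * 2 by norm_num, Nat.factorization_mul (by norm_num) (by norm_num)]
      simp [Nat.Prime.factorization (by norm_num : Nat.Prime 3),
        Nat.Prime.factorization (by norm_num : Nat.Prime 2)]
    have hindex : (P : Subgroup G).index = 2 := by
      have h := Subgroup.card_mul_index (P : Subgroup G)
      rw [hNcard, hPcard] at h
      omega
    have hs1 : Nat.card (Sylow 3 G) = 1 := by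
      have h1 := card_sylow_modEq_one 3 G
      have h2 := Sylow.card_dvd_index P
      rw [hindex] at h2
      have hle2 : Nat.card (Sylow 3 G) ≤ 2 := Nat.le_of_dvd (by norm_num) h2
      interval_cases h : Nat.card (Sylow 3 G)
      · exact absurd h1 (by decide)
      · rfl
      · exact absurd h1 (by decide)
    haveI : Subsingleton (Sylow 3 G) :=
      Nat.card_eq_one_iff_unique.mp hs1 |>.1
    have hc : ∀ i : Fin 4, c i ∈ (P : Subgroup G) := by
      intro i
      have ho : orderOf (c i) = 3 := by
        have := horder i
        fin_cases i <;> simpa using this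
      have hpg : IsPGroup 3 (Subgroup.zpowers (c i)) := by
        rw [IsPGroup.iff_card]
        exact ⟨1, by rw [Nat.card_zpowers, ho, pow_one]⟩
      obtain ⟨Q, hQ⟩ := hpg.exists_le_sylow
      have : Q = P := Subsingleton.elim _ _
      exact this ▸ hQ (Subgroup.mem_zpowers _)
    have hle : (⊤ : Subgroup G) ≤ (P : Subgroup G) := by
      rw [← hclos, Subgroup.closure_le]
      rintro x (hx | hx)
      · rcases hx with hx | hx <;>
          · obtain ⟨i, -⟩ := hx; exact absurd i.2 (by simp)
      · obtain ⟨i, rfl⟩ := hx; exact hc i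
    have : (P : Subgroup G) = ⊤ := top_le_iff.mp hle
    rw [this] at hPcard
    rw [Subgroup.card_top, hNcard] at hPcard
    omega
  refine ⟨key, ?_⟩
  rintro ⟨-, G, _, _, hgen, hRH⟩
  have hcard : Fintype.card G = 6 := by
    rw [RHFormula] at hRH
    norm_num at hRH
    have h6 : (Fintype.card G : ℚ) = 6 := by
      nlinarith [hRH]
    exact_mod_cast h6
  exact key G hcard hgen
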